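/- For the complex five-dimensional system with real A_1, A_2 and A_{1,2} = A_1 - A_2, the real quantity U_c = A_1(|ω_1|^2 + |ω_4|^2) + A_2(|ω_2|^2 + |ω_3|^2) is conserved along solutions. -/

import Mathlib

open Complex

lemma hasDerivAt_normSq_comp {ω : ℝ → ℂ} {d : ℂ} {t : ℝ} (h : HasDerivAt ω d t) :
    HasDerivAt (fun t => Complex.normSq (ω t))
      ((starRingEnd ℂ d * ω t + starRingEnd ℂ (ω t) * d).re) t := by
  have hc : HasDerivAt (fun t => starRingEnd ℂ (ω t)) (starRingEnd ℂ d) t := h.star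
  have hm := hc.mul h
  have hre := (Complex.reCLM.hasFDerivAt.comp_hasDerivAt t hm)
  convert hre using 2 with s
  any_goals rfl
  simp [Function.comp, Complex.normSq_apply, Complex.mul_re]

/-- For the complex five-dimensional system with real `A₁, A₂` and `A₁₂ = A₁ - A₂`, the
real quantity `U_c = A₁(|ω₁|² + |ω₄|²) + A₂(|ω₂|² + |ω₃|²)` is conserved. -/
theorem Uc_invariant (ω₁ ω₂ ω₃ ω₄ ωp : ℝ → ℂ) (A₁ A₂ A₁₂ : ℝ) (hA₁₂ : A₁₂ = A₁ - A₂)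
    (h₁ : ∀ t, HasDerivAt ω₁ (-(A₂ : ℂ) * (starRingEnd ℂ) (ωp t) * ω₂ t) t)
    (h₂ : ∀ t, HasDerivAt ω₂
      ((A₁ : ℂ) * ωp t * ω₁ t - (A₂ : ℂ) * (starRingEnd ℂ) (ωp t) * ω₃ t) t)
    (h₃ : ∀ t, HasDerivAt ω₃
      ((A₂ : ℂ) * ωp t * ω₂ t - (A₁ : ℂ) * (starRingEnd ℂ) (ωp t) * ω₄ t) t)
    (h₄ : ∀ t, HasDerivAt ω₄ ((A₂ : ℂ) * ωp t * ω₃ t) t)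
    (hp : ∀ t, HasDerivAt ωp
      ((A₁₂ : ℂ) * ((starRingEnd ℂ) (ω₃ t) * ω₄ t - (starRingEnd ℂ) (ω₁ t) * ω₂ t)) t) :
    ∀ t, HasDerivAt
      (fun t => A₁ * (Complex.normSq (ω₁ t) + Complex.normSq (ω₄ t))
        + A₂ * (Complex.normSq (ω₂ t) + Complex.normSq (ω₃ t))) (0 : ℝ) t := by
  intro t
  have d₁ := hasDerivAt_normSq_comp (h₁ t)
  have d₂ := hasDerivAt_normSq_comp (h₂ t)
  have d₃ := hasDerivAt_normSq_comp (h₃ t)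
  have d₄ := hasDerivAt_normSq_comp (h₄ t)
  have := (((d₁.add d₄).const_mul A₁).add ((d₂.add d₃).const_mul A₂))
  convert this using 1
  any_goals rfl
  simp only [Complex.add_re, Complex.mul_re, Complex.sub_re, Complex.sub_im, Complex.add_im,
    Complex.mul_im, Complex.neg_re, Complex.neg_im, Complex.conj_re, Complex.conj_im,
    Complex.ofReal_re, Complex.ofReal_im]
  ring
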